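/- If there is a set S ⊆ ω^ω of cardinality λ such that |S ∩ C| < μ for every compact C ⊆ ω^ω, then every ℵ₁-incomplete ultrafilter over any κ is (λ,μ;ω)-regular. -/

import Mathlib

universe u

namespace UMeas

variable {A : Type u}

/-- The first `n` values of an infinite sequence, as a list. -/
def seg (s : ℕ → A) (n : ℕ) : List A := List.ofFn (fun i : Fin n => s i)

/-- `T` is a `U`-branching tree: a set of finite sequences closed under initial
segments, containing the empty sequence, whose branching sets are in `U`. -/
def IsUTree (U : Ultrafilter A) (T : Set (List A)) : Prop :=
  ([] ∈ T) ∧ (∀ σ ∈ T, ∀ τ : List A, τ <+: σ → τ ∈ T) ∧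
    ∀ σ ∈ T, {a : A | σ ++ [a] ∈ T} ∈ U

/-- The set of infinite branches through `T`. -/
def branches (T : Set (List A)) : Set (ℕ → A) := {s | ∀ n, seg s n ∈ T}

/-- Concatenation `σ⌢s` of a finite sequence with an infinite sequence. -/
def app (σ : List A) (s : ℕ → A) : ℕ → A :=
  fun n => if h : n < σ.length then σ.get ⟨n, h⟩ else s (n - σ.length)

/-- The section `X↾σ = {s | σ⌢s ∈ X}`. -/
def sect (X : Set (ℕ → A)) (σ : List A) : Set (ℕ → A) := {s | app σ s ∈ X}

def ULarge (U : Ultrafilter A) (X : Set (ℕ → A)) : Prop :=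
  ∃ T, IsUTree U T ∧ branches T ⊆ X

def USmall (U : Ultrafilter A) (X : Set (ℕ → A)) : Prop :=
  ∃ T, IsUTree U T ∧ branches T ∩ X = ∅

def UDetermined (U : Ultrafilter A) (X : Set (ℕ → A)) : Prop :=
  ULarge U X ∨ USmall U X

def UNull (U : Ultrafilter A) (X : Set (ℕ → A)) : Prop :=
  ∀ σ : List A, USmall U (sect X σ)

def UMeasurable (U : Ultrafilter A) (X : Set (ℕ → A)) : Prop :=
  ∀ σ : List A, UDetermined U (sect X σ)

end UMeas

namespace UMeas

/-- Sequences of ordinal length `β` with values in `A`. -/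
def OSeq (A : Type u) (β : Ordinal.{u}) := ∀ γ : Ordinal.{u}, γ < β → A

/-- Restriction `s↾γ` of an ordinal-length sequence. -/
def ores {A : Type u} {β : Ordinal.{u}} (s : OSeq A β) (γ : Ordinal.{u}) (h : γ ≤ β) :
    OSeq A γ := fun δ hδ => s δ (hδ.trans_le h)

/-- Extension `s⌢⟨a⟩` of an ordinal-length sequence by one element. -/
noncomputable def oext {A : Type u} {β : Ordinal.{u}} (s : OSeq A β) (a : A) : OSeq A (β + 1) :=
  fun δ hδ => if h : δ < β then s δ h else a

/-- A closed `U`-branching tree of height `α`: for each `β`, `mem β` is the set of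
sequences of length `β` in the tree (only levels `β < α` are relevant). -/
structure ClosedUBT (A : Type u) (U : Ultrafilter A) (α : Ordinal.{u}) where
  mem : ∀ β : Ordinal.{u}, Set (OSeq A β)
  isTree : ∀ β γ : Ordinal.{u}, β < α → (h : γ ≤ β) → ∀ s ∈ mem β, ores s γ h ∈ mem γ
  succ : ∀ β : Ordinal.{u}, β + 1 < α → ∀ s ∈ mem β, {a : A | oext s a ∈ mem (β + 1)} ∈ U
  nonsucc : ∀ β : Ordinal.{u}, β < α → (¬ ∃ γ : Ordinal.{u}, β = γ + 1) →
    ∀ s : OSeq A β, s ∈ mem β ↔ ∀ γ : Ordinal.{u}, (h : γ < β) → ores s γ h.le ∈ mem γ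

/-- `U` is `(l, m; α)`-regular: there is a family of `l` closed `U`-branching trees of
height `α + 1` such that no subfamily of size `m` has a common maximal element. -/
def LMARegular {A : Type u} (U : Ultrafilter A) (l m : Cardinal.{u}) (α : Ordinal.{u}) : Prop :=
  ∃ T : (Cardinal.ord l).ToType → ClosedUBT A U (α + 1),
    ∀ S : Set (Cardinal.ord l).ToType, Cardinal.mk ↥S = m →
      ¬ ∃ s : OSeq A α, ∀ β ∈ S, s ∈ (T β).mem α

end UMeas

namespace UMeas

/-- The tree of sequences whose `n`-th entry has `g`-value at least `σ n`. -/
noncomputable def treeOf {A : Type} (U : Ultrafilter A) (g : A → ℕ)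
    (hg : ∀ N : ℕ, {a : A | N ≤ g a} ∈ U) (σ : ℕ → ℕ) :
    ClosedUBT A U (Ordinal.omega0 + 1) where
  mem β := {s : OSeq A β | ∀ n : ℕ, (h : (n : Ordinal.{0}) < β) → σ n ≤ g (s n h)}
  isTree := by
    intro β γ _ h s hs n hn
    exact hs n (hn.trans_le h)
  succ := by
    intro β _ s hs
    by_cases hb : ∃ n : ℕ, (n : Ordinal.{0}) = β
    · obtain ⟨n0, hn0⟩ := hb
      apply Filter.mem_of_superset (hg (σ n0))
      intro a ha n hn
      by_cases hnβ : (n : Ordinal.{0}) < β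
      · have he : oext s a (n : Ordinal.{0}) hn = s n hnβ := dif_pos hnβ
        rw [he]; exact hs n hnβ
      · have hle : (n : Ordinal.{0}) ≤ β := by
          rw [Ordinal.add_one_eq_succ, Order.lt_succ_iff] at hn; exact hn
        have heq : (n : Ordinal.{0}) = β := le_antisymm hle (not_lt.mp hnβ)
        have hn0' : n = n0 := by
          have : (n : Ordinal.{0}) = (n0 : Ordinal.{0}) := heq.trans hn0.symm
          exact_mod_cast this
        have he : oext s a (n : Ordinal.{0}) hn = a := dif_neg hnβ
        rw [he, hn0']; exact ha
    · apply Filter.mem_of_superset Filter.univ_mem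
      intro a _ n hn
      by_cases hnβ : (n : Ordinal.{0}) < β
      · have he : oext s a (n : Ordinal.{0}) hn = s n hnβ := dif_pos hnβ
        rw [he]; exact hs n hnβ
      · exfalso
        apply hb
        refine ⟨n, le_antisymm ?_ (not_lt.mp hnβ)⟩
        rw [Ordinal.add_one_eq_succ, Order.lt_succ_iff] at hn; exact hn
  nonsucc := by
    intro β _ hβ s
    constructor
    · intro hs γ h n hn
      exact hs n (hn.trans h)
    · intro h n hn
      have h1 : ((n : Ordinal.{0}) + 1) < β := by
        have hle : ((n : Ordinal.{0}) + 1) ≤ β := by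
          rw [Ordinal.add_one_eq_succ, Order.succ_le_iff]; exact hn
        refine lt_of_le_of_ne hle fun hEq => hβ ⟨n, hEq.symm⟩
      exact h ((n : Ordinal.{0}) + 1) h1 n (lt_add_one _)

end UMeas

theorem stmt19 (l m : Cardinal.{0}) (S : Set (ℕ → ℕ))
    (hcard : Cardinal.mk ↥S = l)
    (hS : ∀ C : Set (ℕ → ℕ), IsCompact C → Cardinal.mk ↥(S ∩ C) < m)
    {A : Type} (U : Ultrafilter A)
    (hU : ∃ f : ℕ → Set A, (∀ n, f n ∈ U) ∧ (⋂ n, f n) ∉ U) :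
    UMeas.LMARegular U l m Ordinal.omega0 := by
  classical
  obtain ⟨f, hf, hfi⟩ := hU
  set Y : ℕ → Set A := fun n => ⋂ k ∈ Finset.range (n + 1), f k with hYdef
  have hYU : ∀ n, Y n ∈ U := by
    intro n
    exact (Filter.biInter_finset_mem _).mpr fun k _ => hf k
  have hYanti : ∀ {k n : ℕ}, k ≤ n → Y n ⊆ Y k := by
    intro k n hkn a ha
    simp only [hYdef, Set.mem_iInter, Finset.mem_range] at ha ⊢
    intro j hj
    exact ha j (lt_of_lt_of_le hj (by omega))
  have hIeq : (⋂ n, Y n) = ⋂ n, f n := by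
    ext a
    simp only [hYdef, Set.mem_iInter, Finset.mem_range]
    constructor
    · intro h n; exact h n n (by omega)
    · intro h n k _; exact h k
  have hICompl : (⋂ n, Y n)ᶜ ∈ U := by
    rw [hIeq]
    exact Ultrafilter.compl_mem_iff_notMem.mpr hfi
  set g : A → ℕ := fun a => if h : ∃ n, a ∉ Y n then Nat.find h else 0 with hgdef
  have hg : ∀ N : ℕ, {a : A | N ≤ g a} ∈ U := by
    intro N
    apply Filter.mem_of_superset (Filter.inter_mem (hYU N) hICompl)
    rintro a ⟨ha1, ha2⟩
    have hex : ∃ n, a ∉ Y n := by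
      by_contra hc
      push_neg at hc
      exact ha2 (Set.mem_iInter.mpr hc)
    simp only [Set.mem_setOf_eq, hgdef, dif_pos hex]
    by_contra hlt
    push_neg at hlt
    exact Nat.find_spec hex (hYanti hlt.le ha1)
  -- the equivalence between the index type and S
  have hmk : Cardinal.mk (Cardinal.ord l).ToType = Cardinal.mk ↥S :=
    (Cardinal.mk_ord_toType l).trans hcard.symm
  obtain ⟨e⟩ := Cardinal.eq.mp hmk
  refine ⟨fun β => UMeas.treeOf U g hg (e β : ℕ → ℕ), ?_⟩
  intro S' hS' ⟨s, hs⟩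
  set t : ℕ → ℕ := fun i => g (s (i : Ordinal.{0}) (Ordinal.nat_lt_omega0 i)) with htdef
  set C : Set (ℕ → ℕ) := {u | ∀ i, u i ≤ t i} with hCdef
  have hCcomp : IsCompact C := by
    have : C = Set.pi Set.univ (fun i => Set.Iic (t i)) := by
      ext u
      simp [hCdef, Set.mem_pi, Pi.le_def]
    rw [this]
    exact isCompact_univ_pi fun i => (Set.finite_Iic (t i)).isCompact
  have hinj : Function.Injective
      (fun b : ↥S' => (⟨(e b.1 : ℕ → ℕ), (e b.1).2,
        fun i => hs b.1 b.2 i (Ordinal.nat_lt_omega0 i)⟩ : ↥(S ∩ C))) := by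
    intro b1 b2 hb
    have hb' := congrArg Subtype.val hb
    dsimp only at hb'
    have : e b1.1 = e b2.1 := Subtype.ext hb'
    exact Subtype.ext (e.injective this)
  have hle : m ≤ Cardinal.mk ↥(S ∩ C) := by
    rw [← hS']
    exact Cardinal.mk_le_of_injective hinj
  exact absurd (lt_of_le_of_lt hle (hS C hCcomp)) (lt_irrefl m)
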